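/- Let x : Fin N → ℝ² (N ≥ 1) be data points, v¹, v² ∈ ℝ² linearly independent, C := {z : ⟪v¹,z⟫ ≥ 0 ∧ ⟪v²,z⟫ ≥ 0}, B⁺ := segment [v¹, v²], and p ∈ (0,1]. If the data set is totally ordered by the cone order, i.e. for all i, j ∈ Fin N either x i − x j ∈ C or x j − x i ∈ C, then there exists an index j ∈ Fin N such that Q⁻_C(p) = x j + C; that is, the lower C-quantile is a single data point plus the cone. -/
import Mathlib


open scoped RealInnerProductSpace

abbrev E2 := EuclideanSpace ℝ (Fin 2)

/-- The empirical `w`-location depth of `z` with respect to the data points `x`. -/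
noncomputable def wdepth {N : ℕ} (x : Fin N → E2) (w z : E2) : ℕ :=
  {i : Fin N | ⟪w, x i⟫ ≤ ⟪w, z⟫}.ncard

/-- The cone location depth: the minimum of the `w`-location depths over `w` in the
base `B⁺ = segment [v¹, v²]` of the dual cone. -/
noncomputable def cdepth {N : ℕ} (x : Fin N → E2) (v1 v2 : E2) (z : E2) : ℕ :=
  sInf ((fun w => wdepth x w z) '' segment ℝ v1 v2)

/-- Any `w` in the segment `[v1, v2]` has nonnegative inner product with any `u`
in the cone dual to both `v1` and `v2`. -/
lemma seg_inner_nonneg {v1 v2 w u : E2} (hw : w ∈ segment ℝ v1 v2)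
    (h1 : 0 ≤ ⟪v1, u⟫) (h2 : 0 ≤ ⟪v2, u⟫) : 0 ≤ ⟪w, u⟫ := by
  obtain ⟨a, b, ha, hb, hab, rfl⟩ := hw
  rw [inner_add_left, real_inner_smul_left, real_inner_smul_left]
  have := mul_nonneg ha h1
  have := mul_nonneg hb h2
  linarith

theorem stmt16 {N : ℕ} (hN : 1 ≤ N) (x : Fin N → E2) (v1 v2 : E2)
    (hv : LinearIndependent ℝ ![v1, v2]) (p : ℝ) (hp : p ∈ Set.Ioc (0 : ℝ) 1)
    (htot : ∀ i j : Fin N,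
      x i - x j ∈ {u : E2 | 0 ≤ ⟪v1, u⟫ ∧ 0 ≤ ⟪v2, u⟫} ∨
      x j - x i ∈ {u : E2 | 0 ≤ ⟪v1, u⟫ ∧ 0 ≤ ⟪v2, u⟫}) :
    ∃ j : Fin N,
      {z : E2 | ⌈(N : ℝ) * p⌉₊ ≤ cdepth x v1 v2 z}
        = {z : E2 | z - x j ∈ {u : E2 | 0 ≤ ⟪v1, u⟫ ∧ 0 ≤ ⟪v2, u⟫}} := by
  classical
  have hNpos : (0 : ℝ) < N := by exact_mod_cast hN
  set K := ⌈(N : ℝ) * p⌉₊ with hKdef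
  have hK1 : 1 ≤ K := Nat.one_le_ceil_iff.mpr (by nlinarith [hp.1])
  have hKN : K ≤ N := Nat.ceil_le.mpr (by nlinarith [hp.2, hp.1])
  haveI : Nonempty (Fin N) := Fin.pos_iff_nonempty.mp hN
  -- the key function: total order on the data
  set key : Fin N → ℝ := fun i => ⟪v1, x i⟫ + ⟪v2, x i⟫ with hkeydef
  -- key ≤ iff cone order
  have hAle : ∀ i k : Fin N, key i ≤ key k →
      0 ≤ ⟪v1, x k - x i⟫ ∧ 0 ≤ ⟪v2, x k - x i⟫ := by
    intro i k hik
    rcases htot k i with ⟨h1, h2⟩ | ⟨h1, h2⟩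
    · exact ⟨h1, h2⟩
    · simp only [Set.mem_setOf_eq, inner_sub_right] at h1 h2 ⊢
      simp only [hkeydef] at hik
      constructor <;> linarith
  -- one strict component implies strict key inequality
  have hAlt : ∀ i k : Fin N, (⟪v1, x i⟫ < ⟪v1, x k⟫ ∨ ⟪v2, x i⟫ < ⟪v2, x k⟫) →
      key i < key k := by
    intro i k hik
    rcases htot i k with ⟨h1, h2⟩ | ⟨h1, h2⟩
    · rw [inner_sub_right] at h1 h2
      rcases hik with h | h <;> linarith
    · rw [inner_sub_right] at h1 h2
      simp only [hkeydef]
      rcases hik with h | h <;> linarith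
  -- the depth counting function
  set g : Fin N → ℕ := fun i => {k : Fin N | key k ≤ key i}.ncard with hgdef
  -- the set of indices of depth at least K is nonempty
  obtain ⟨m0, hm0⟩ := Finite.exists_max key
  have hm0T : K ≤ g m0 := by
    have : {k : Fin N | key k ≤ key m0} = Set.univ := by
      ext k; simp [hm0 k]
    simp only [hgdef, this, Set.ncard_univ, Nat.card_eq_fintype_card,
      Fintype.card_fin]
    exact hKN
  -- choose j minimizing g among indices with g ≥ K
  have hSne : (g '' {i : Fin N | K ≤ g i}).Nonempty := ⟨g m0, m0, hm0T, rfl⟩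
  obtain ⟨j, hjT, hjval⟩ := Nat.sInf_mem hSne
  have hjmin : ∀ i : Fin N, K ≤ g i → g j ≤ g i := by
    intro i hi
    rw [hjval]
    exact Nat.sInf_le ⟨i, hi, rfl⟩
  -- the strict predecessor count of j is < K
  have hlt : {k : Fin N | key k < key j}.ncard < K := by
    by_contra hcon
    push_neg at hcon
    set L : Set (Fin N) := {k : Fin N | key k < key j} with hLdef
    have hLne : L.Nonempty := Set.nonempty_of_ncard_ne_zero (by omega)
    obtain ⟨m, hmL, hmmax⟩ := Set.exists_max_image L key (Set.toFinite L) hLne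
    have hmL' : key m < key j := hmL
    -- g m ≥ K since L ⊆ {k | key k ≤ key m}
    have hsub1 : L ⊆ {k : Fin N | key k ≤ key m} := by
      intro k hk
      exact Set.mem_setOf_eq ▸ hmmax k hk
    have hgm : K ≤ g m := le_trans hcon (Set.ncard_le_ncard hsub1 (Set.toFinite _))
    -- g m ≤ ncard L since {k | key k ≤ key m} ⊆ L
    have hsub2 : {k : Fin N | key k ≤ key m} ⊆ L := by
      intro k hk
      have hk' : key k ≤ key m := hk
      show key k < key j
      exact lt_of_le_of_lt hk' hmL'
    have hgm2 : g m ≤ L.ncard := Set.ncard_le_ncard hsub2 (Set.toFinite _)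
    -- ncard L < g j
    have hsub3 : insert j L ⊆ {k : Fin N | key k ≤ key j} := by
      intro k hk
      simp only [Set.mem_insert_iff, hLdef, Set.mem_setOf_eq] at hk ⊢
      rcases hk with rfl | hk
      · exact le_refl _
      · exact le_of_lt hk
    have hjL : j ∉ L := by simp [hLdef]
    have hLj : L.ncard + 1 ≤ g j := by
      rw [← Set.ncard_insert_of_notMem hjL (Set.toFinite L)]
      exact Set.ncard_le_ncard hsub3 (Set.toFinite _)
    have := hjmin m hgm
    omega
  refine ⟨j, ?_⟩
  ext z
  simp only [Set.mem_setOf_eq]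
  constructor
  · -- cdepth ≥ K implies z - x j in the cone
    intro hz
    by_contra hcon
    simp only [Set.mem_setOf_eq, not_and_or, not_le] at hcon
    -- in either case we find w ∈ segment with small wdepth
    have hkey : ∃ w ∈ segment ℝ v1 v2, ⟪w, z⟫ < ⟪w, x j⟫ ∧
        (∀ i : Fin N, ⟪w, x i⟫ < ⟪w, x j⟫ → key i < key j) := by
      by_cases h1 : 0 ≤ ⟪v1, z - x j⟫
      · refine ⟨v2, right_mem_segment ℝ v1 v2, ?_, ?_⟩
        · rcases hcon with h | h
          · exact absurd h1 (not_le.mpr h)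
          · rw [inner_sub_right] at h
            linarith
        · intro i hi
          exact hAlt i j (Or.inr hi)
      · refine ⟨v1, left_mem_segment ℝ v1 v2, ?_, ?_⟩
        · push_neg at h1
          rw [inner_sub_right] at h1
          linarith
        · intro i hi
          exact hAlt i j (Or.inl hi)
    obtain ⟨w, hwseg, hwz, hwlt⟩ := hkey
    have hsub : {i : Fin N | ⟪w, x i⟫ ≤ ⟪w, z⟫} ⊆ {k : Fin N | key k < key j} := by
      intro i hi
      have hi' : ⟪w, x i⟫ ≤ ⟪w, z⟫ := hi
      show key i < key j
      exact hwlt i (lt_of_le_of_lt hi' hwz)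
    have hwd : wdepth x w z < K :=
      lt_of_le_of_lt (Set.ncard_le_ncard hsub (Set.toFinite _)) hlt
    have hle : cdepth x v1 v2 z ≤ wdepth x w z :=
      Nat.sInf_le ⟨w, hwseg, rfl⟩
    omega
  · -- z - x j in the cone implies cdepth ≥ K
    intro hz
    refine le_csInf ⟨wdepth x v1 z, v1, left_mem_segment ℝ v1 v2, rfl⟩ ?_
    rintro b ⟨w, hwseg, rfl⟩
    have hsub : {k : Fin N | key k ≤ key j} ⊆ {i : Fin N | ⟪w, x i⟫ ≤ ⟪w, z⟫} := by
      intro k hk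
      have hk' : key k ≤ key j := hk
      obtain ⟨h1, h2⟩ := hAle k j hk'
      have hwj : 0 ≤ ⟪w, x j - x k⟫ := seg_inner_nonneg hwseg h1 h2
      have hwz : 0 ≤ ⟪w, z - x j⟫ := seg_inner_nonneg hwseg hz.1 hz.2
      rw [inner_sub_right] at hwj hwz
      simp only [Set.mem_setOf_eq]
      linarith
    calc K ≤ g j := hjT
      _ ≤ wdepth x w z := Set.ncard_le_ncard hsub (Set.toFinite _)
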